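/- Let p be a prime, let R be a perfect 𝔽_p-algebra, and let A be a commutative ring that is p-adically complete. Then there is a natural bijection between the set of ring homomorphisms W(R) → A and the set of ring homomorphisms R → (A/(p))^♭, where (A/(p))^♭ = Ring.Perfection (A/(p)) p is the inverse limit perfection (tilt) of A/(p); explicitly, composing with the canonical projection (A/(p))^♭ → A/(p) (the 0-th component of the inverse limit) gives a bijection from ring homomorphisms R → (A/(p))^♭ to ring homomorphisms R → A/(p), which in turn correspond bijectively to ring homomorphisms W(R) → A via f ↦ (r ↦ f(τ(r)) mod (p)). -/

import Mathlib

set_option linter.unusedSectionVars false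
open WittVector Finset

set_option linter.unusedSectionVars false

namespace Stmt10Aux

variable {p : ℕ} [hp : Fact p.Prime]

/-- Naturality of Witt vector Frobenius. -/
theorem map_frobenius_comm {A B : Type*} [CommRing A] [CommRing B] (π : A →+* B)
    (x : WittVector p A) :
    WittVector.map π (WittVector.frobenius x) = WittVector.frobenius (WittVector.map π x) := by
  ext n
  rw [WittVector.map_coeff, WittVector.coeff_frobenius, WittVector.coeff_frobenius]
  have : (fun k => (WittVector.map π x).coeff k) = fun k => π (x.coeff k) := by
    funext k; rw [WittVector.map_coeff]
  show π _ = MvPolynomial.aeval (WittVector.map π x).coeff _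
  rw [show (WittVector.map π x).coeff = fun k => π (x.coeff k) from funext fun k =>
    WittVector.map_coeff π x k]
  rw [MvPolynomial.map_aeval, MvPolynomial.aeval_eq_eval₂Hom]
  exact MvPolynomial.eval₂Hom_congr (RingHom.ext_int _ _) rfl rfl

theorem ghostComponent_zero_eq {B : Type*} [CommRing B] (x : WittVector p B) :
    WittVector.ghostComponent 0 x = x.coeff 0 := by
  rw [WittVector.ghostComponent_apply, aeval_wittPolynomial]
  simp

end Stmt10Aux

namespace Stmt10Aux

variable {p : ℕ} [hp : Fact p.Prime]

theorem ker_le {A : Type*} [CommRing A] (n : ℕ) :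
    RingHom.ker (WittVector.map (p := p) (Ideal.Quotient.mk (Ideal.span {(p : A)}))) ≤
      RingHom.ker ((Ideal.Quotient.mk (Ideal.span {(p : A)} ^ (n + 1))).comp
        (WittVector.ghostComponent n)) := by
  intro x hx
  rw [RingHom.mem_ker] at hx ⊢
  have hc : ∀ i, (p : A) ∣ x.coeff i := by
    intro i
    have := congrArg (fun y => WittVector.coeff y i) hx
    simp only [WittVector.map_coeff, WittVector.zero_coeff] at this
    rwa [Ideal.Quotient.eq_zero_iff_mem, Ideal.mem_span_singleton] at this
  rw [RingHom.comp_apply, Ideal.Quotient.eq_zero_iff_mem, Ideal.span_singleton_pow,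
    Ideal.mem_span_singleton, WittVector.ghostComponent_apply, aeval_wittPolynomial]
  refine Finset.dvd_sum fun i hi => ?_
  rw [Finset.mem_range, Nat.lt_succ_iff] at hi
  obtain ⟨t, ht⟩ := hc i
  have h1 : (p : A) ^ (n + 1) ∣ (p : A) ^ (i + p ^ (n - i)) := by
    apply pow_dvd_pow
    have : n - i < p ^ (n - i) := Nat.lt_pow_self hp.out.one_lt
    omega
  refine dvd_trans h1 ?_
  rw [ht, mul_pow, pow_add]
  exact mul_dvd_mul_left _ (dvd_mul_right _ _)

end Stmt10Aux

namespace Stmt10Aux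

variable {p : ℕ} [hp : Fact p.Prime]

/-- Fontaine's `θₙ : W(A/p) →+* A/p^(n+1)`, induced by the `n`-th ghost component. -/
noncomputable def theta (A : Type*) [CommRing A] (n : ℕ) :
    WittVector p (A ⧸ Ideal.span {(p : A)}) →+* A ⧸ (Ideal.span {(p : A)} ^ (n + 1)) :=
  (WittVector.map (p := p) (Ideal.Quotient.mk (Ideal.span {(p : A)}))).liftOfSurjective
    (WittVector.map_surjective _ Ideal.Quotient.mk_surjective)
    ⟨(Ideal.Quotient.mk (Ideal.span {(p : A)} ^ (n + 1))).comp (WittVector.ghostComponent n),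
      ker_le n⟩

theorem theta_map (A : Type*) [CommRing A] (n : ℕ) (x : WittVector p A) :
    theta A n (WittVector.map (Ideal.Quotient.mk (Ideal.span {(p : A)})) x) =
      Ideal.Quotient.mk (Ideal.span {(p : A)} ^ (n + 1)) (WittVector.ghostComponent n x) :=
  RingHom.liftOfRightInverse_comp_apply _ _ _ _ x

theorem theta_succ (A : Type*) [CommRing A] (n : ℕ)
    (y : WittVector p (A ⧸ Ideal.span {(p : A)})) :
    Ideal.Quotient.factor (Ideal.pow_le_pow_right (Nat.le_succ (n + 1)))
        (theta A (n + 1) y) = theta A n (WittVector.frobenius y) := by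
  obtain ⟨x, rfl⟩ := WittVector.map_surjective (p := p)
    (Ideal.Quotient.mk (Ideal.span {(p : A)})) Ideal.Quotient.mk_surjective y
  rw [theta_map, Ideal.Quotient.factor_mk, ← map_frobenius_comm, theta_map,
    WittVector.ghostComponent_frobenius]

end Stmt10Aux

namespace Stmt10Aux

variable {p : ℕ} [hp : Fact p.Prime]

variable (p) in
/-- Iterated inverse Frobenius on `W R`. -/
noncomputable def sIter (R : Type*) [CommRing R] [CharP R p] [PerfectRing R p] :
    ℕ → (WittVector p R →+* WittVector p R)
  | 0 => RingHom.id _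
  | n + 1 => ((WittVector.frobeniusEquiv p R).symm : WittVector p R ≃+* WittVector p R).toRingHom.comp (sIter R n)

theorem frobenius_sIter_succ (R : Type*) [CommRing R] [CharP R p] [PerfectRing R p]
    (n : ℕ) (x : WittVector p R) :
    WittVector.frobenius (sIter p R (n + 1) x) = sIter p R n x := by
  show WittVector.frobenius ((WittVector.frobeniusEquiv p R).symm (sIter p R n x)) = _
  rw [← WittVector.frobeniusEquiv_apply]
  exact (WittVector.frobeniusEquiv p R).apply_symm_apply _

variable (p) in
/-- The approximations `W(R) →+* A/p^(n+1)` to the desired lift. -/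
noncomputable def fseq (R : Type*) [CommRing R] [CharP R p] [PerfectRing R p]
    (A : Type*) [CommRing A] (g : R →+* A ⧸ Ideal.span {(p : A)}) (n : ℕ) :
    WittVector p R →+* A ⧸ (Ideal.span {(p : A)} ^ (n + 1)) :=
  (theta A n).comp ((WittVector.map g).comp (sIter p R n))

theorem fseq_succ (R : Type*) [CommRing R] [CharP R p] [PerfectRing R p]
    (A : Type*) [CommRing A] (g : R →+* A ⧸ Ideal.span {(p : A)}) (n : ℕ)
    (x : WittVector p R) :
    Ideal.Quotient.factor (Ideal.pow_le_pow_right (Nat.le_succ (n + 1)))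
        (fseq p R A g (n + 1) x) = fseq p R A g n x := by
  show Ideal.Quotient.factor _ (theta A (n + 1) (WittVector.map g (sIter p R (n + 1) x))) = _
  rw [theta_succ, ← map_frobenius_comm, frobenius_sIter_succ]
  rfl

theorem fseq_factor (R : Type*) [CommRing R] [CharP R p] [PerfectRing R p]
    (A : Type*) [CommRing A] (g : R →+* A ⧸ Ideal.span {(p : A)}) {m n : ℕ} (h : m ≤ n)
    (x : WittVector p R) :
    Ideal.Quotient.factor (Ideal.pow_le_pow_right (by omega : m + 1 ≤ n + 1))
        (fseq p R A g n x) = fseq p R A g m x := by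
  induction n with
  | zero =>
    obtain rfl : m = 0 := by omega
    obtain ⟨a, ha⟩ := Ideal.Quotient.mk_surjective (I := Ideal.span {(p : A)} ^ (0 + 1))
      (fseq p R A g 0 x)
    rw [← ha, Ideal.Quotient.factor_mk]
  | succ n ih =>
    rcases Nat.lt_or_ge m (n + 1) with hm | hm
    · have hmn : m ≤ n := by omega
      rw [← ih hmn, ← fseq_succ R A g n x]
      obtain ⟨a, ha⟩ := Ideal.Quotient.mk_surjective (I := Ideal.span {(p : A)} ^ (n + 1 + 1))
        (fseq p R A g (n + 1) x)
      rw [← ha, Ideal.Quotient.factor_mk, Ideal.Quotient.factor_mk, Ideal.Quotient.factor_mk]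
    · obtain rfl : m = n + 1 := by omega
      obtain ⟨a, ha⟩ := Ideal.Quotient.mk_surjective (I := Ideal.span {(p : A)} ^ (n + 1 + 1))
        (fseq p R A g (n + 1) x)
      rw [← ha, Ideal.Quotient.factor_mk]

end Stmt10Aux

namespace Stmt10Aux

variable {p : ℕ} [hp : Fact p.Prime]
variable (R : Type*) [CommRing R] [CharP R p] [PerfectRing R p]
variable (A : Type*) [CommRing A] [IsAdicComplete (Ideal.span {(p : A)}) A]

theorem exists_glue (g : R →+* A ⧸ Ideal.span {(p : A)}) (x : WittVector p R) :
    ∃ L : A, ∀ n : ℕ, Ideal.Quotient.mk (Ideal.span {(p : A)} ^ (n + 1)) L =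
      fseq p R A g n x := by
  have hc : ∀ n : ℕ, ∃ a : A, Ideal.Quotient.mk (Ideal.span {(p : A)} ^ (n + 1)) a = fseq p R A g n x :=
    fun n => Ideal.Quotient.mk_surjective _
  choose c hcs using hc
  have hcauchy : ∀ {m n : ℕ}, m ≤ n → c m ≡ c n [SMOD (Ideal.span {(p : A)} ^ m • ⊤ : Submodule A A)] := by
    intro m n hmn
    rw [SModEq.sub_mem, smul_eq_mul, Ideal.mul_top]
    have h1 : Ideal.Quotient.mk (Ideal.span {(p : A)} ^ (m + 1)) (c m) = Ideal.Quotient.mk (Ideal.span {(p : A)} ^ (m + 1)) (c n) := by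
      rw [hcs m, ← fseq_factor R A g hmn x, ← hcs n, Ideal.Quotient.factor_mk]
    have h2 : c m - c n ∈ Ideal.span {(p : A)} ^ (m + 1) := by
      rwa [Ideal.Quotient.eq] at h1
    exact Ideal.pow_le_pow_right (Nat.le_succ m) h2
  obtain ⟨L, hL⟩ := IsPrecomplete.prec (inferInstance : IsPrecomplete (Ideal.span {(p : A)}) A) @hcauchy
  refine ⟨L, fun n => ?_⟩
  have h1 : c (n + 1) - L ∈ Ideal.span {(p : A)} ^ (n + 1) := by
    have := hL (n + 1)
    rwa [SModEq.sub_mem, smul_eq_mul, Ideal.mul_top] at this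
  have h2' : Ideal.Quotient.mk (Ideal.span {(p : A)} ^ (n + 1)) L = Ideal.Quotient.mk (Ideal.span {(p : A)} ^ (n + 1)) (c (n + 1)) := by
    rw [Ideal.Quotient.eq]
    simpa using neg_mem h1
  rw [h2']
  calc Ideal.Quotient.mk (Ideal.span {(p : A)} ^ (n + 1)) (c (n + 1))
      = Ideal.Quotient.factor (Ideal.pow_le_pow_right (Nat.le_succ (n + 1)))
        (Ideal.Quotient.mk (Ideal.span {(p : A)} ^ (n + 1 + 1)) (c (n + 1))) :=
      (Ideal.Quotient.factor_mk _ _).symm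
    _ = fseq p R A g n x := by rw [hcs (n + 1)]; exact fseq_succ R A g n x

end Stmt10Aux

namespace Stmt10Aux

variable {p : ℕ} [hp : Fact p.Prime]
variable (R : Type*) [CommRing R] [CharP R p] [PerfectRing R p]
variable (A : Type*) [CommRing A] [IsAdicComplete (Ideal.span {(p : A)}) A]

theorem sep {a b : A} (h : ∀ n : ℕ, a - b ∈ Ideal.span {(p : A)} ^ (n + 1)) : a = b := by
  rw [← sub_eq_zero]
  refine IsHausdorff.haus (inferInstance : IsHausdorff (Ideal.span {(p : A)}) A) (a - b) fun n => ?_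
  rw [SModEq.zero, smul_eq_mul, Ideal.mul_top]
  exact Ideal.pow_le_pow_right (Nat.le_succ n) (h n)

variable {R A} in
theorem exists_hom (g : R →+* A ⧸ Ideal.span {(p : A)}) :
    ∃ f : WittVector p R →+* A, ∀ (n : ℕ) (x : WittVector p R),
      Ideal.Quotient.mk (Ideal.span {(p : A)} ^ (n + 1)) (f x) = fseq p R A g n x := by
  choose F hF using exists_glue R A g
  have key : ∀ (a : A) (x : WittVector p R),
      (∀ n : ℕ, Ideal.Quotient.mk (Ideal.span {(p : A)} ^ (n + 1)) a = fseq p R A g n x) →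
      F x = a := by
    intro a x hx
    exact sep A fun n => Ideal.Quotient.eq.mp ((hF x n).trans (hx n).symm)
  refine ⟨⟨⟨⟨F, ?_⟩, ?_⟩, ?_, ?_⟩, fun n x => hF x n⟩
  · exact key 1 1 (fun n => by rw [map_one, map_one])
  · intro x y
    exact key (F x * F y) (x * y) (fun n => by rw [map_mul, map_mul, hF, hF])
  · exact key 0 0 (fun n => by rw [map_zero, map_zero])
  · intro x y
    exact key (F x + F y) (x + y) (fun n => by rw [map_add, map_add, hF, hF])

variable {R A} in
theorem hom_teichmuller (g : R →+* A ⧸ Ideal.span {(p : A)}) (f : WittVector p R →+* A)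
    (hf : ∀ (n : ℕ) (x : WittVector p R),
      Ideal.Quotient.mk (Ideal.span {(p : A)} ^ (n + 1)) (f x) = fseq p R A g n x)
    (r : R) :
    Ideal.Quotient.mk (Ideal.span {(p : A)}) (f (WittVector.teichmuller p r)) = g r := by
  obtain ⟨a, ha⟩ := Ideal.Quotient.mk_surjective (I := Ideal.span {(p : A)}) (g r)
  have h0 : Ideal.Quotient.mk (Ideal.span {(p : A)} ^ (0 + 1)) (f (WittVector.teichmuller p r)) =
      Ideal.Quotient.mk (Ideal.span {(p : A)} ^ (0 + 1)) a := by
    rw [hf 0]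
    show theta A 0 (WittVector.map g (WittVector.teichmuller p r)) = _
    rw [WittVector.map_teichmuller, ← ha, ← WittVector.map_teichmuller, theta_map,
      ghostComponent_zero_eq, WittVector.teichmuller_coeff_zero]
  have := Ideal.Quotient.eq.mp h0
  rw [pow_one] at this
  rw [← ha, Ideal.Quotient.eq]
  exact this

end Stmt10Aux

namespace Stmt10Aux

variable {p : ℕ} [hp : Fact p.Prime]

/-- Every Witt vector over a perfect ring decomposes as Teichmüller plus `p` times something. -/
theorem decomp (R : Type*) [CommRing R] [CharP R p] [PerfectRing R p] (x : WittVector p R) :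
    ∃ z : WittVector p R, x = WittVector.teichmuller p (x.coeff 0) + (p : WittVector p R) * z := by
  set y := x - WittVector.teichmuller p (x.coeff 0) with hy
  have hy0 : y.coeff 0 = 0 := by
    have : WittVector.ghostComponent 0 y = 0 := by
      rw [hy, map_sub, ghostComponent_zero_eq, ghostComponent_zero_eq,
        WittVector.teichmuller_coeff_zero, sub_self]
    rwa [ghostComponent_zero_eq] at this
  set w := WittVector.mk p (fun n => y.coeff (n + 1)) with hw
  have hvy : WittVector.verschiebung w = y := by
    ext n
    cases n with
    | zero => rw [WittVector.verschiebung_coeff_zero, hy0]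
    | succ n => rw [WittVector.verschiebung_coeff_succ, hw, WittVector.coeff_mk]
  refine ⟨(WittVector.frobeniusEquiv p R).symm w, ?_⟩
  have : WittVector.verschiebung
      (WittVector.frobenius ((WittVector.frobeniusEquiv p R).symm w)) =
      ((WittVector.frobeniusEquiv p R).symm w) * p := WittVector.verschiebung_frobenius _
  rw [← WittVector.frobeniusEquiv_apply, (WittVector.frobeniusEquiv p R).apply_symm_apply, hvy]
    at this
  rw [mul_comm]
  rw [← this, hy]
  ring

/-- If `a ≡ b mod I` and `p ∈ I` then `a^(p^n) ≡ b^(p^n) mod I^(n+1)`. -/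
theorem pow_cong {A : Type*} [CommRing A] {I : Ideal A} (hpI : (p : A) ∈ I)
    {a b : A} (hab : a - b ∈ I) : ∀ n : ℕ, a ^ p ^ n - b ^ p ^ n ∈ I ^ (n + 1)
  | 0 => by simpa using hab
  | n + 1 => by
    have ih := pow_cong hpI hab n
    have hS : (∑ i ∈ Finset.range p, (a ^ p ^ n) ^ i * (b ^ p ^ n) ^ (p - 1 - i)) ∈ I := by
      rw [← Ideal.Quotient.eq_zero_iff_mem, map_sum]
      have hab' : (Ideal.Quotient.mk I a) ^ p ^ n = (Ideal.Quotient.mk I b) ^ p ^ n := by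
        rw [← map_pow, ← map_pow, Ideal.Quotient.eq]
        exact (Ideal.pow_le_pow_right (by omega : 1 ≤ n + 1)).trans (pow_one I).le ih
      calc ∑ i ∈ Finset.range p, (Ideal.Quotient.mk I) ((a ^ p ^ n) ^ i * (b ^ p ^ n) ^ (p - 1 - i))
          = ∑ i ∈ Finset.range p, ((Ideal.Quotient.mk I b) ^ p ^ n) ^ (p - 1) := by
            refine Finset.sum_congr rfl fun i hi => ?_
            rw [Finset.mem_range] at hi
            simp only [map_mul, map_pow]
            rw [hab', ← pow_add]
            congr 1
            omega
        _ = 0 := by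
            rw [Finset.sum_const, Finset.card_range, nsmul_eq_mul]
            have : (p : A ⧸ I) = 0 := by
              rw [← map_natCast (Ideal.Quotient.mk I), Ideal.Quotient.eq_zero_iff_mem]
              exact hpI
            rw [this, zero_mul]
    have hfact : a ^ p ^ (n + 1) - b ^ p ^ (n + 1) =
        (∑ i ∈ Finset.range p, (a ^ p ^ n) ^ i * (b ^ p ^ n) ^ (p - 1 - i)) *
          (a ^ p ^ n - b ^ p ^ n) := by
      rw [geom_sum₂_mul, ← pow_mul, ← pow_mul, ← pow_succ]
    rw [hfact, pow_succ, mul_comm (I ^ (n + 1)) I]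
    exact Ideal.mul_mem_mul hS ih

end Stmt10Aux

namespace Stmt10Aux

variable {p : ℕ} [hp : Fact p.Prime]
variable {R : Type*} [CommRing R] [CharP R p] [PerfectRing R p]
variable {A : Type*} [CommRing A]

theorem unique_aux (f f' : WittVector p R →+* A)
    (h : ∀ r : R, f (WittVector.teichmuller p r) - f' (WittVector.teichmuller p r) ∈
      Ideal.span {(p : A)}) :
    ∀ (n : ℕ) (x : WittVector p R), f x - f' x ∈ Ideal.span {(p : A)} ^ (n + 1) := by
  have hpI : (p : A) ∈ Ideal.span {(p : A)} := Ideal.subset_span rfl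
  have htau : ∀ (n : ℕ) (r : R),
      f (WittVector.teichmuller p r) - f' (WittVector.teichmuller p r) ∈
        Ideal.span {(p : A)} ^ (n + 1) := by
    intro n r
    -- write r = s ^ (p ^ n) with s the n-fold pth root
    set s := (fun y => (frobeniusEquiv R p).symm y)^[n] r with hs
    have hsr : s ^ p ^ n = r := by
      clear_value s
      subst hs
      induction n with
      | zero => simp
      | succ n ih =>
        rw [Function.iterate_succ_apply']
        have hq : ((frobeniusEquiv R p).symm ((fun y => (frobeniusEquiv R p).symm y)^[n] r)) ^
            p ^ (n + 1) =
            (((frobeniusEquiv R p).symm ((fun y => (frobeniusEquiv R p).symm y)^[n] r)) ^ p) ^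
              p ^ n := by
          rw [← pow_mul, pow_succ', mul_comm p (p ^ n), pow_mul, ← pow_mul, mul_comm]
        rw [hq]
        have : ((frobeniusEquiv R p).symm ((fun y => (frobeniusEquiv R p).symm y)^[n] r)) ^ p =
            (fun y => (frobeniusEquiv R p).symm y)^[n] r := by
          have := (frobeniusEquiv R p).apply_symm_apply
            ((fun y => (frobeniusEquiv R p).symm y)^[n] r)
          rwa [_root_.frobeniusEquiv_apply, _root_.frobenius_def] at this
        rw [this, ih]
    have htpow : WittVector.teichmuller p r =
        (WittVector.teichmuller p s) ^ p ^ n := by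
      rw [← hsr, map_pow]
    rw [htpow, map_pow, map_pow]
    exact pow_cong hpI (h s) n
  intro n
  induction n with
  | zero =>
    intro x
    set c := x.coeff 0 with hc
    obtain ⟨z, hz⟩ := decomp R x
    rw [← hc] at hz
    have hrw : f x - f' x =
        (f (WittVector.teichmuller p c) - f' (WittVector.teichmuller p c)) +
          (p : A) * (f z - f' z) := by
      rw [hz]
      simp only [map_add, map_mul, map_natCast]
      ring
    rw [hrw, pow_one]
    exact Ideal.add_mem _ ((pow_one (Ideal.span {(p : A)})) ▸ htau 0 c :)
      (Ideal.mul_mem_right _ _ hpI)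
  | succ n ih =>
    intro x
    set c := x.coeff 0 with hc
    obtain ⟨z, hz⟩ := decomp R x
    rw [← hc] at hz
    have hrw : f x - f' x =
        (f (WittVector.teichmuller p c) - f' (WittVector.teichmuller p c)) +
          (p : A) * (f z - f' z) := by
      rw [hz]
      simp only [map_add, map_mul, map_natCast]
      ring
    rw [hrw]
    refine Ideal.add_mem _ (htau (n + 1) c) ?_
    rw [pow_succ']
    exact Ideal.mul_mem_mul hpI (ih z)

end Stmt10Aux





theorem stmt10 (p : ℕ) [Fact p.Prime]
    (R : Type*) [CommRing R] [CharP R p] [PerfectRing R p]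
    (A : Type*) [CommRing A] [IsAdicComplete (Ideal.span {(p : A)}) A]
    [CharP (A ⧸ Ideal.span {(p : A)}) p] :
    Function.Bijective
        (fun g : R →+* Perfection (A ⧸ Ideal.span {(p : A)}) p =>
          (Perfection.coeff (A ⧸ Ideal.span {(p : A)}) p 0).comp g) ∧
      ∀ g : R →+* A ⧸ Ideal.span {(p : A)},
        ∃! f : WittVector p R →+* A,
          ∀ r : R,
            Ideal.Quotient.mk (Ideal.span {(p : A)}) (f (WittVector.teichmuller p r)) = g r := by
  constructor
  · exact (Perfection.lift p R (A ⧸ Ideal.span {(p : A)})).symm.bijective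
  · intro g
    obtain ⟨f, hf⟩ := Stmt10Aux.exists_hom (p := p) g
    refine ⟨f, fun r => Stmt10Aux.hom_teichmuller g f hf r, ?_⟩
    intro f' hf'
    have h : ∀ r : R, f' (WittVector.teichmuller p r) - f (WittVector.teichmuller p r) ∈
        Ideal.span {(p : A)} := by
      intro r
      rw [← Ideal.Quotient.eq]
      rw [hf' r, Stmt10Aux.hom_teichmuller g f hf r]
    refine RingHom.ext fun x => ?_
    exact Stmt10Aux.sep A fun n => Stmt10Aux.unique_aux f' f h n x
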